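/- If R_t is a convex upper continuous (c.u.c.) conditional risk measure and w ∈ M_{t,+}^+ \ M_t^⊥, then the scalarization ρ_t(X) := inf_{u∈R_t(X)} E[wᵀu] (with values in the extended reals, inf over the empty set being +∞) is lower semicontinuous on L^p. -/

import Mathlib

set_option maxHeartbeats 1000000
set_option synthInstance.maxHeartbeats 200000


open MeasureTheory Set Filter
open scoped ENNReal Pointwise

noncomputable section

namespace MultiRisk

/-- The ambient context: a filtered probability space on `[0,T]` satisfying the usual
conditions with `ℱ T = m0`, dimensions `d` and `em ≤ d` (the number of eligible assets),
and conjugate exponents `p, q ∈ [1,∞]`. -/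
structure Ctx (Ω : Type*) where
  m0 : MeasurableSpace Ω
  P : @MeasureTheory.Measure Ω m0
  probP : @MeasureTheory.IsProbabilityMeasure Ω m0 P
  d : ℕ
  em : ℕ
  em_pos : 1 ≤ em
  em_le : em ≤ d
  p : ℝ≥0∞
  hp : 1 ≤ p
  q : ℝ≥0∞
  hpq : 1 / p + 1 / q = 1
  T : ℝ
  hT : 0 ≤ T
  F : @MeasureTheory.Filtration Ω ℝ _ m0
  hFT : F T = m0
  /-- usual conditions: right-continuity of the filtration -/
  right_cont : ∀ t : ℝ, F t = ⨅ s ∈ Set.Ioi t, F s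
  /-- usual conditions: completeness, `F 0` contains all `P`-null sets -/
  complete : ∀ N : Set Ω, P N = 0 → MeasurableSet[F 0] N

variable {Ω : Type*}

instance factLeP (C : Ctx Ω) : Fact (1 ≤ C.p) := ⟨C.hp⟩

/-- portfolio vectors: `ℝ^d` (with an arbitrary norm; here the sup norm). -/
abbrev EV (C : Ctx Ω) : Type _ := Fin C.d → ℝ

/-- the space `L^p(Ω, F_T, P; ℝ^d)`. -/
abbrev LpSp (C : Ctx Ω) : Type _ := MeasureTheory.Lp (α := Ω) (EV C) C.p C.P

/-- pointwise pairing `wᵀu`. -/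
def pairPt (C : Ctx Ω) (w u : Ω → EV C) (ω : Ω) : ℝ := ∑ i, w ω i * u ω i

/-- the bilinear pairing `E[wᵀu]`. -/
def pairF (C : Ctx Ω) (w u : Ω → EV C) : ℝ := ∫ ω, pairPt C w u ω ∂C.P

/-- `F_t`-measurability (in the a.e. sense) of a vector-valued function. -/
def measT (C : Ctx Ω) (t : ℝ) (v : Ω → EV C) : Prop :=
  @MeasureTheory.AEStronglyMeasurable _ _ _ (C.F t) C.m0 v C.P

/-- `F_t`-measurability (in the a.e. sense) of a scalar function. -/
def measT1 (C : Ctx Ω) (t : ℝ) (φ : Ω → ℝ) : Prop :=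
  @MeasureTheory.AEStronglyMeasurable _ _ _ (C.F t) C.m0 φ C.P

/-- the subspace `L^p_t` of `F_t`-measurable elements of `L^p`. -/
def Lpt (C : Ctx Ω) (t : ℝ) : Set (LpSp C) := {f | measT C t ⇑f}

/-- the cone `L^p_+` of a.s. componentwise nonnegative elements. -/
def LpPos (C : Ctx Ω) : Set (LpSp C) := {f | ∀ᵐ ω ∂C.P, ∀ i, 0 ≤ (⇑f : Ω → EV C) ω i}

/-- membership of a vector of `ℝ^d` in `M = ℝ^m × {0}^{d-m}`. -/
def inM (C : Ctx Ω) (x : EV C) : Prop := ∀ i : Fin C.d, C.em ≤ (i : ℕ) → x i = 0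

/-- the space `M_t` of eligible portfolios. -/
def Msp (C : Ctx Ω) (t : ℝ) : Set (LpSp C) :=
  {f | f ∈ Lpt C t ∧ ∀ᵐ ω ∂C.P, inM C ((⇑f : Ω → EV C) ω)}

/-- `M_{t,+}`. -/
def MspPos (C : Ctx Ω) (t : ℝ) : Set (LpSp C) := Msp C t ∩ LpPos C

/-- the half space `G_t(w) ⊆ L^p_t`. -/
def G (C : Ctx Ω) (t : ℝ) (w : Ω → EV C) : Set (LpSp C) :=
  {u ∈ Lpt C t | 0 ≤ pairF C w ⇑u}

/-- `G_t^M(w) = G_t(w) ∩ M_t`. -/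
def GM (C : Ctx Ω) (t : ℝ) (w : Ω → EV C) : Set (LpSp C) := G C t w ∩ Msp C t

/-- the conditional "half space" `Γ_t(w) ⊆ L^p_t`. -/
def Gam (C : Ctx Ω) (t : ℝ) (w : Ω → EV C) : Set (LpSp C) :=
  {u ∈ Lpt C t | ∀ᵐ ω ∂C.P, 0 ≤ pairPt C w ⇑u ω}

/-- `Γ_t^M(w) = Γ_t(w) ∩ M_t`. -/
def GamM (C : Ctx Ω) (t : ℝ) (w : Ω → EV C) : Set (LpSp C) := Gam C t w ∩ Msp C t

/-- Minkowski subtraction `A -. B = {m ∈ M_t : B + {m} ⊆ A}` inside `M_t`. -/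
def msub (C : Ctx Ω) (t : ℝ) (A B : Set (LpSp C)) : Set (LpSp C) :=
  {x ∈ Msp C t | ∀ b ∈ B, b + x ∈ A}

/-- the positive dual cone (in `L^q_t`, represented by functions) of a set `S ⊆ L^p`. -/
def posDual (C : Ctx Ω) (t : ℝ) (S : Set (LpSp C)) : Set (Ω → EV C) :=
  {v | MeasureTheory.MemLp v C.q C.P ∧ measT C t v ∧ ∀ u ∈ S, 0 ≤ pairF C v ⇑u}

/-- the orthogonal space `M_t^⊥ ⊆ L^q_t`. -/
def Mperp (C : Ctx Ω) (t : ℝ) : Set (Ω → EV C) :=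
  {v | MeasureTheory.MemLp v C.q C.P ∧ measT C t v ∧ ∀ u ∈ Msp C t, pairF C v ⇑u = 0}

/-- `A^+ := {v ∈ L^q : E[vᵀ Y] ≥ 0 for all Y ∈ A}`. -/
def accDual (C : Ctx Ω) (A : Set (LpSp C)) : Set (Ω → EV C) :=
  {v | MeasureTheory.MemLp v C.q C.P ∧ ∀ Y ∈ A, 0 ≤ pairF C v ⇑Y}

/-- a `d`-dimensional vector probability measure absolutely continuous w.r.t. `P`. -/
def IsVProb (C : Ctx Ω) (Q : Fin C.d → @MeasureTheory.Measure Ω C.m0) : Prop :=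
  (∀ i, @MeasureTheory.IsProbabilityMeasure Ω C.m0 (Q i)) ∧ (∀ i, Q i ≪ C.P)

/-- the density `dQ_i/dP` as a real valued function. -/
def dens (C : Ctx Ω) (Q : Fin C.d → @MeasureTheory.Measure Ω C.m0) (i : Fin C.d) (ω : Ω) : ℝ :=
  (@MeasureTheory.Measure.rnDeriv Ω C.m0 (Q i) C.P ω).toReal

/-- `ξ̄_{t,s}(Q_i)`. -/
def xibar (C : Ctx Ω) (Q : Fin C.d → @MeasureTheory.Measure Ω C.m0) (t s : ℝ) (ω : Ω)
    (i : Fin C.d) : ℝ :=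
  if 0 < MeasureTheory.condExp (C.F t) C.P (dens C Q i) ω then
    MeasureTheory.condExp (C.F s) C.P (dens C Q i) ω /
      MeasureTheory.condExp (C.F t) C.P (dens C Q i) ω
  else 1

/-- the `Q`-conditional expectation `E^Q[X | F_t]` (componentwise). -/
def condExpQ (C : Ctx Ω) (Q : Fin C.d → @MeasureTheory.Measure Ω C.m0) (t : ℝ)
    (X : Ω → EV C) : Ω → EV C :=
  fun ω i => MeasureTheory.condExp (C.F t) C.P (fun ω' => xibar C Q t C.T ω' i * X ω' i) ω

/-- `w_t^s(Q,w) = diag(w) ξ_{t,s}(Q)`. -/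
def wts (C : Ctx Ω) (Q : Fin C.d → @MeasureTheory.Measure Ω C.m0) (w : Ω → EV C)
    (t s : ℝ) : Ω → EV C :=
  fun ω i => w ω i * xibar C Q t s ω i

/-- `Q = P|_{F_t}`, i.e. `ξ_{0,t}(Q) = (1,…,1)`. -/
def restrP (C : Ctx Ω) (Q : Fin C.d → @MeasureTheory.Measure Ω C.m0) (t : ℝ) : Prop :=
  ∀ᵐ ω ∂C.P, ∀ i, xibar C Q 0 t ω i = 1

/-- the set of dual variables `W_t`. -/
def Wdual (C : Ctx Ω) (t : ℝ) :
    Set ((Fin C.d → @MeasureTheory.Measure Ω C.m0) × (Ω → EV C)) :=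
  {Qw | IsVProb C Qw.1 ∧ Qw.2 ∈ posDual C t (MspPos C t) ∧ Qw.2 ∉ Mperp C t ∧
    MeasureTheory.MemLp (wts C Qw.1 Qw.2 t C.T) C.q C.P ∧
    (∀ᵐ ω ∂C.P, ∀ i, 0 ≤ wts C Qw.1 Qw.2 t C.T ω i) ∧ restrP C Qw.1 t}

/-- `W_t^{max}` relative to an acceptance set `A`. -/
def WdualMax (C : Ctx Ω) (t : ℝ) (A : Set (LpSp C)) :
    Set ((Fin C.d → @MeasureTheory.Measure Ω C.m0) × (Ω → EV C)) :=
  {Qw ∈ Wdual C t | wts C Qw.1 Qw.2 t C.T ∈ accDual C A}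

/-- `W_t^e`: dual variables whose vector measure is equivalent to `P`. -/
def WdualE (C : Ctx Ω) (t : ℝ) :
    Set ((Fin C.d → @MeasureTheory.Measure Ω C.m0) × (Ω → EV C)) :=
  {Qw ∈ Wdual C t | ∀ i, C.P ≪ Qw.1 i}

/-- translate of a set of `L^p` elements by a (possibly non-`L^p`) function `g`. -/
def shiftSet (C : Ctx Ω) (g : Ω → EV C) (S : Set (LpSp C)) : Set (LpSp C) :=
  {u | ∃ v ∈ S, ⇑u =ᵐ[C.P] fun ω => g ω + (⇑v : Ω → EV C) ω}

/-- `(E^Q[-X|F_t] + G_t(w)) ∩ M_t`. -/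
def EQhalfG (C : Ctx Ω) (Q : Fin C.d → @MeasureTheory.Measure Ω C.m0) (t : ℝ)
    (X : Ω → EV C) (w : Ω → EV C) : Set (LpSp C) :=
  shiftSet C (condExpQ C Q t (-X)) (G C t w) ∩ Msp C t

/-- `(E^Q[-X|F_t] + Γ_t(w)) ∩ M_t`. -/
def EQhalfGam (C : Ctx Ω) (Q : Fin C.d → @MeasureTheory.Measure Ω C.m0) (t : ℝ)
    (X : Ω → EV C) (w : Ω → EV C) : Set (LpSp C) :=
  shiftSet C (condExpQ C Q t (-X)) (Gam C t w) ∩ Msp C t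

/-- the minimal penalty function `β_t(Q,w)` built from an acceptance set `A`. -/
def penalty (C : Ctx Ω) (t : ℝ) (A : Set (LpSp C))
    (Q : Fin C.d → @MeasureTheory.Measure Ω C.m0) (w : Ω → EV C) : Set (LpSp C) :=
  ⋂ Y ∈ A, EQhalfG C Q t (⇑Y) w

/-- the minimal conditional penalty function `α_t(Q,w)` built from an acceptance set `A`. -/
def condPenalty (C : Ctx Ω) (t : ℝ) (A : Set (LpSp C))
    (Q : Fin C.d → @MeasureTheory.Measure Ω C.m0) (w : Ω → EV C) : Set (LpSp C) :=
  ⋂ Y ∈ A, EQhalfGam C Q t (⇑Y) w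

/-- the elementwise conditional expectation `E^Q[S | F_t]` of a set `S ⊆ L^p`. -/
def EQset (C : Ctx Ω) (Q : Fin C.d → @MeasureTheory.Measure Ω C.m0) (t : ℝ)
    (S : Set (LpSp C)) : Set (LpSp C) :=
  {u | ∃ v ∈ S, ⇑u =ᵐ[C.P] condExpQ C Q t ⇑v}

/-- the product of a bounded measurable function with an `L^p` element. -/
def smulBdd (C : Ctx Ω) (φ : Ω → ℝ) (hφ : MeasureTheory.MemLp φ ∞ C.P) (f : LpSp C) :
    LpSp C :=
  MeasureTheory.MemLp.toLp (φ • ⇑f) ((MeasureTheory.Lp.memLp f).smul hφ)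

/-- a conditional risk measure at time `t`. -/
structure IsCRM (C : Ctx Ω) (t : ℝ) (R : LpSp C → Set (LpSp C)) : Prop where
  subM : ∀ X, R X ⊆ Msp C t
  upper : ∀ X, R X + MspPos C t = R X
  transl : ∀ X, ∀ mt ∈ Msp C t, R (X + mt) = (fun u => u - mt) '' R X
  mono : ∀ X Y : LpSp C, Y - X ∈ LpPos C → R X ⊆ R Y
  finite0 : R 0 ≠ ∅ ∧ R 0 ≠ Msp C t

/-- normalization: `R(X) = R(X) + R(0)`. -/
def Normalized (C : Ctx Ω) (R : LpSp C → Set (LpSp C)) : Prop :=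
  ∀ X, R X + R 0 = R X

/-- convexity of a set-valued risk measure. -/
def ConvexRM (C : Ctx Ω) (R : LpSp C → Set (LpSp C)) : Prop :=
  ∀ X Y : LpSp C, ∀ l : ℝ, 0 ≤ l → l ≤ 1 →
    l • R X + (1 - l) • R Y ⊆ R (l • X + (1 - l) • Y)

/-- positive homogeneity. -/
def PosHom (C : Ctx Ω) (R : LpSp C → Set (LpSp C)) : Prop :=
  ∀ X : LpSp C, ∀ l : ℝ, 0 < l → R (l • X) = l • R X

/-- conditional convexity. -/
def CondConvexRM (C : Ctx Ω) (t : ℝ) (R : LpSp C → Set (LpSp C)) : Prop :=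
  ∀ (φ ψ : Ω → ℝ) (hφ : MeasureTheory.MemLp φ ∞ C.P) (hψ : MeasureTheory.MemLp ψ ∞ C.P),
    measT1 C t φ → measT1 C t ψ →
    (∀ᵐ ω ∂C.P, 0 ≤ φ ω ∧ 0 ≤ ψ ω ∧ φ ω + ψ ω = 1) →
    ∀ X Y : LpSp C,
      smulBdd C φ hφ '' R X + smulBdd C ψ hψ '' R Y ⊆
        R (smulBdd C φ hφ X + smulBdd C ψ hψ Y)

/-- conditional positive homogeneity. -/
def CondPosHom (C : Ctx Ω) (t : ℝ) (R : LpSp C → Set (LpSp C)) : Prop :=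
  ∀ (φ : Ω → ℝ) (hφ : MeasureTheory.MemLp φ ∞ C.P), measT1 C t φ →
    (∀ᵐ ω ∂C.P, 0 < φ ω) → ∀ X : LpSp C, R (smulBdd C φ hφ X) = smulBdd C φ hφ '' R X

/-- closedness of the graph. -/
def ClosedRM (C : Ctx Ω) (R : LpSp C → Set (LpSp C)) : Prop :=
  IsClosed {z : LpSp C × LpSp C | z.2 ∈ R z.1}

/-- the image space `G(M_t; M_{t,+})`. -/
def GPlus (C : Ctx Ω) (t : ℝ) : Set (Set (LpSp C)) :=
  {D | D ⊆ Msp C t ∧ D = closure (convexHull ℝ (D + MspPos C t))}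

/-- the collection `G(M_t; M_{t,-})`. -/
def GMinus (C : Ctx Ω) (t : ℝ) : Set (Set (LpSp C)) :=
  {D | D ⊆ Msp C t ∧ D = closure (convexHull ℝ (D + -MspPos C t))}

/-- convex upper continuity. -/
def CUC (C : Ctx Ω) (t : ℝ) (R : LpSp C → Set (LpSp C)) : Prop :=
  ∀ D ∈ GMinus C t, IsClosed {X : LpSp C | (R X ∩ D).Nonempty}

/-- a conditionally convex subset of `L^p`. -/
def CondConvexSet (C : Ctx Ω) (t : ℝ) (D : Set (LpSp C)) : Prop :=
  ∀ (φ ψ : Ω → ℝ) (hφ : MeasureTheory.MemLp φ ∞ C.P) (hψ : MeasureTheory.MemLp ψ ∞ C.P),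
    measT1 C t φ → measT1 C t ψ →
    (∀ᵐ ω ∂C.P, 0 ≤ φ ω ∧ 0 ≤ ψ ω ∧ φ ω + ψ ω = 1) →
    ∀ x ∈ D, ∀ y ∈ D, smulBdd C φ hφ x + smulBdd C ψ hψ y ∈ D

/-- conditionally convex upper continuity. -/
def CCUC (C : Ctx Ω) (t : ℝ) (R : LpSp C → Set (LpSp C)) : Prop :=
  ∀ D ∈ GMinus C t, CondConvexSet C t D → IsClosed {X : LpSp C | (R X ∩ D).Nonempty}

/-- the acceptance set of a conditional risk measure. -/
def Acc (C : Ctx Ω) (R : LpSp C → Set (LpSp C)) : Set (LpSp C) := {X | 0 ∈ R X}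

/-- multiportfolio time consistency of a dynamic risk measure. -/
def MPTC (C : Ctx Ω) (R : ℝ → LpSp C → Set (LpSp C)) : Prop :=
  ∀ t s : ℝ, 0 ≤ t → t < s → s ≤ C.T → ∀ X : LpSp C, ∀ 𝒴 : Set (LpSp C),
    R s X ⊆ ⋃ Y ∈ 𝒴, R s Y → R t X ⊆ ⋃ Y ∈ 𝒴, R t Y

/-- the recession cone of a subset of `M_t`. -/
def recc (C : Ctx Ω) (t : ℝ) (S : Set (LpSp C)) : Set (LpSp C) :=
  {r ∈ Msp C t | ∀ u ∈ S, ∀ l : ℝ, 0 ≤ l → u + l • r ∈ S}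

end MultiRisk

namespace MultiRisk
variable {Ω : Type*}

section Scalarization

open MeasureTheory

lemma memLp_coord (C : Ctx Ω) {r : ℝ≥0∞} {f : Ω → EV C} (hf : MemLp f r C.P) (i : Fin C.d) :
    MemLp (fun ω => f ω i) r C.P :=
  (ContinuousLinearMap.proj (R := ℝ) (φ := fun _ : Fin C.d => ℝ) i).comp_memLp' hf

lemma one_div_one_eq (C : Ctx Ω) : (1 : ℝ≥0∞) / 1 = 1 / C.q + 1 / C.p := by
  rw [add_comm, C.hpq, one_div_one]

lemma holder_qp (C : Ctx Ω) : ENNReal.HolderTriple C.q C.p 1 :=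
  ⟨by rw [inv_one, add_comm]; simpa [one_div] using C.hpq⟩

lemma integrable_mul_coord (C : Ctx Ω) {w : Ω → EV C} (hw : MemLp w C.q C.P)
    {f : Ω → EV C} (hf : MemLp f C.p C.P) (i : Fin C.d) :
    Integrable (fun ω => w ω i * f ω i) C.P := by
  have h := (memLp_coord C hf i).smul (memLp_coord C hw i) (hpqr := holder_qp C)
  rw [← MeasureTheory.memLp_one_iff_integrable]
  have he : (fun ω => w ω i) • (fun ω => f ω i) = fun ω => w ω i * f ω i := by
    funext ω; simp [Pi.smul_apply, smul_eq_mul]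
  rwa [he] at h

lemma integrable_pairPt (C : Ctx Ω) {w : Ω → EV C} (hw : MemLp w C.q C.P)
    {f : Ω → EV C} (hf : MemLp f C.p C.P) : Integrable (pairPt C w f) C.P :=
  integrable_finset_sum Finset.univ fun i _ => integrable_mul_coord C hw hf i

lemma pairF_congr (C : Ctx Ω) {w : Ω → EV C} {f g : Ω → EV C} (h : f =ᵐ[C.P] g) :
    pairF C w f = pairF C w g :=
  integral_congr_ae (h.mono fun ω hω => by simp only [pairPt, hω])

lemma pairF_add (C : Ctx Ω) {w : Ω → EV C} (hw : MemLp w C.q C.P)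
    {f g : Ω → EV C} (hf : MemLp f C.p C.P) (hg : MemLp g C.p C.P) :
    pairF C w (f + g) = pairF C w f + pairF C w g := by
  have h : pairPt C w (f + g) = fun ω => pairPt C w f ω + pairPt C w g ω := by
    funext ω
    simp [pairPt, mul_add, Finset.sum_add_distrib]
  unfold pairF
  rw [h]
  exact integral_add (integrable_pairPt C hw hf) (integrable_pairPt C hw hg)

lemma pairF_smul (C : Ctx Ω) {w : Ω → EV C} (a : ℝ) (f : Ω → EV C) :
    pairF C w (a • f) = a * pairF C w f := by
  have h : pairPt C w (a • f) = fun ω => a * pairPt C w f ω := by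
    funext ω
    simp [pairPt, Finset.mul_sum]
    ring_nf
    exact Finset.sum_congr rfl fun i _ => by ring
  unfold pairF
  rw [h, integral_const_mul]

lemma pairF_neg (C : Ctx Ω) {w : Ω → EV C} (f : Ω → EV C) :
    pairF C w (-f) = -pairF C w f := by
  have h : pairPt C w (-f) = fun ω => -pairPt C w f ω := by
    funext ω
    simp [pairPt]
  unfold pairF
  rw [h, integral_neg]

lemma pairL_add (C : Ctx Ω) {w : Ω → EV C} (hw : MemLp w C.q C.P) (u v : LpSp C) :
    pairF C w ⇑(u + v) = pairF C w ⇑u + pairF C w ⇑v := by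
  rw [pairF_congr C (Lp.coeFn_add u v)]
  exact pairF_add C hw (Lp.memLp u) (Lp.memLp v)

lemma pairL_smul (C : Ctx Ω) {w : Ω → EV C} (a : ℝ) (u : LpSp C) :
    pairF C w ⇑(a • u) = a * pairF C w ⇑u := by
  rw [pairF_congr C (Lp.coeFn_smul a u)]
  exact pairF_smul C a ⇑u

lemma pairL_neg (C : Ctx Ω) {w : Ω → EV C} (u : LpSp C) :
    pairF C w ⇑(-u) = -pairF C w ⇑u := by
  rw [pairF_congr C (Lp.coeFn_neg u)]
  exact pairF_neg C ⇑u

lemma pairL_bound (C : Ctx Ω) {w : Ω → EV C} (hw : MemLp w C.q C.P) (u : LpSp C) :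
    ‖pairF C w ⇑u‖ ≤ (C.d * (eLpNorm w C.q C.P).toReal) * ‖u‖ := by
  have hu : MemLp (⇑u) C.p C.P := Lp.memLp u
  have hint : ∀ i : Fin C.d, Integrable (fun ω => ‖w ω i * u ω i‖) C.P :=
    fun i => (integrable_mul_coord C hw hu i).norm
  have h1 : ‖pairF C w ⇑u‖ ≤ ∫ ω, ∑ i, ‖w ω i * u ω i‖ ∂C.P := by
    refine (norm_integral_le_integral_norm _).trans ?_
    refine integral_mono (integrable_pairPt C hw hu).norm
      (integrable_finset_sum Finset.univ fun i _ => hint i) fun ω => ?_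
    exact norm_sum_le _ _
  have h2 : ∫ ω, ∑ i, ‖w ω i * u ω i‖ ∂C.P = ∑ i, ∫ ω, ‖w ω i * u ω i‖ ∂C.P :=
    integral_finset_sum Finset.univ fun i _ => hint i
  have h3 : ∀ i : Fin C.d, ∫ ω, ‖w ω i * u ω i‖ ∂C.P ≤ (eLpNorm w C.q C.P).toReal * ‖u‖ := by
    intro i
    have hae : AEStronglyMeasurable[C.m0] (fun ω => w ω i * u ω i) C.P :=
      (integrable_mul_coord C hw hu i).aestronglyMeasurable
    have e1 : ∫ ω, ‖w ω i * u ω i‖ ∂C.P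
        = (eLpNorm (fun ω => w ω i * u ω i) 1 C.P).toReal := by
      rw [integral_norm_eq_lintegral_enorm hae, eLpNorm_one_eq_lintegral_enorm]
    have e2 : eLpNorm (fun ω => w ω i * u ω i) 1 C.P
        ≤ eLpNorm (fun ω => w ω i) C.q C.P * eLpNorm (fun ω => u ω i) C.p C.P := by
      have h := eLpNorm_smul_le_mul_eLpNorm (f := fun ω => u ω i) (φ := fun ω => w ω i)
        (p := C.q) (q := C.p) (r := 1) (μ := C.P) (memLp_coord C hu i).aestronglyMeasurable
        (memLp_coord C hw i).aestronglyMeasurable (hpqr := holder_qp C)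
      have he : (fun ω => w ω i) • (fun ω => u ω i) = fun ω => w ω i * u ω i := by
        funext ω; simp [Pi.smul_apply, smul_eq_mul]
      rwa [he] at h
    have e3 : eLpNorm (fun ω => w ω i) C.q C.P ≤ eLpNorm w C.q C.P :=
      eLpNorm_mono fun ω => norm_le_pi_norm (w ω) i
    have e4 : eLpNorm (fun ω => u ω i) C.p C.P ≤ eLpNorm (⇑u) C.p C.P :=
      eLpNorm_mono fun ω => norm_le_pi_norm (u ω) i
    have e5 : eLpNorm (fun ω => w ω i * u ω i) 1 C.P
        ≤ eLpNorm w C.q C.P * eLpNorm (⇑u) C.p C.P :=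
      e2.trans (mul_le_mul' e3 e4)
    have hfin : eLpNorm w C.q C.P * eLpNorm (⇑u) C.p C.P ≠ ⊤ :=
      ENNReal.mul_ne_top hw.eLpNorm_ne_top (Lp.eLpNorm_ne_top u)
    rw [e1]
    calc (eLpNorm (fun ω => w ω i * u ω i) 1 C.P).toReal
        ≤ (eLpNorm w C.q C.P * eLpNorm (⇑u) C.p C.P).toReal :=
          ENNReal.toReal_mono hfin e5
      _ = (eLpNorm w C.q C.P).toReal * ‖u‖ := by
          rw [ENNReal.toReal_mul, Lp.norm_def]
  calc ‖pairF C w ⇑u‖ ≤ ∑ i, ∫ ω, ‖w ω i * u ω i‖ ∂C.P := by rw [← h2]; exact h1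
    _ ≤ ∑ _i : Fin C.d, (eLpNorm w C.q C.P).toReal * ‖u‖ :=
        Finset.sum_le_sum fun i _ => h3 i
    _ = (C.d * (eLpNorm w C.q C.P).toReal) * ‖u‖ := by
        rw [Finset.sum_const, Finset.card_univ, Fintype.card_fin, nsmul_eq_mul]
        ring

lemma pair_continuous (C : Ctx Ω) {w : Ω → EV C} (hw : MemLp w C.q C.P) :
    Continuous fun u : LpSp C => pairF C w ⇑u := by
  let L : LpSp C →ₗ[ℝ] ℝ :=
    { toFun := fun u => pairF C w ⇑u
      map_add' := pairL_add C hw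
      map_smul' := fun a u => pairL_smul C a u }
  exact (L.mkContinuous (C.d * (eLpNorm w C.q C.P).toReal)
    (fun u => pairL_bound C hw u)).continuous

/-- the continuous linear map on `EV C` zeroing out the first `em` coordinates. -/
def tailCLM (C : Ctx Ω) : EV C →L[ℝ] EV C :=
  LinearMap.mkContinuous
    { toFun := fun x i => if C.em ≤ (i : ℕ) then x i else 0
      map_add' := fun x y => by
        funext i; by_cases h : C.em ≤ (i : ℕ) <;> simp [h]
      map_smul' := fun a x => by
        funext i; by_cases h : C.em ≤ (i : ℕ) <;> simp [h] }
    1 (fun x => by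
      rw [one_mul]
      refine (pi_norm_le_iff_of_nonneg (norm_nonneg x)).mpr fun i => ?_
      by_cases h : C.em ≤ (i : ℕ)
      · simpa [h] using norm_le_pi_norm x i
      · simp [h])

lemma isClosed_Msp (C : Ctx Ω) (t : ℝ) : IsClosed (Msp C t) := by
  have h1 : IsClosed (Lpt C t) := by
    have h := MeasureTheory.isClosed_aestronglyMeasurable (F := EV C) (p := C.p) (μ := C.P)
      (C.F.le t)
    exact h
  have h2 : IsClosed {f : LpSp C | ∀ᵐ ω ∂C.P, inM C ((⇑f : Ω → EV C) ω)} := by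
    have heq : {f : LpSp C | ∀ᵐ ω ∂C.P, inM C ((⇑f : Ω → EV C) ω)}
        = (ContinuousLinearMap.compLpL C.p C.P (tailCLM C)) ⁻¹' {0} := by
      ext f
      simp only [Set.mem_setOf_eq, Set.mem_preimage, Set.mem_singleton_iff]
      rw [MeasureTheory.Lp.eq_zero_iff_ae_eq_zero]
      constructor
      · intro hf
        filter_upwards [ContinuousLinearMap.coeFn_compLpL (p := C.p) (μ := C.P) (tailCLM C) f, hf]
          with ω h1 h2
        rw [h1]
        funext i
        by_cases h : C.em ≤ (i : ℕ)
        · simpa [tailCLM, LinearMap.mkContinuous_apply, h] using h2 i h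
        · simp [tailCLM, LinearMap.mkContinuous_apply, h]
      · intro hf
        filter_upwards [ContinuousLinearMap.coeFn_compLpL (p := C.p) (μ := C.P) (tailCLM C) f, hf]
          with ω h1 h2 i hi
        have := congrFun (h1.symm.trans h2) i
        simpa [tailCLM, LinearMap.mkContinuous_apply, hi] using this
    rw [heq]
    exact IsClosed.preimage (ContinuousLinearMap.compLpL C.p C.P (tailCLM C)).continuous
      isClosed_singleton
  exact h1.inter h2

lemma Msp_add (C : Ctx Ω) {t : ℝ} {u v : LpSp C} (hu : u ∈ Msp C t) (hv : v ∈ Msp C t) :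
    u + v ∈ Msp C t := by
  refine ⟨(hu.1.add hv.1).congr (Lp.coeFn_add u v).symm, ?_⟩
  filter_upwards [hu.2, hv.2, Lp.coeFn_add u v] with ω h1 h2 h3 i hi
  rw [h3]
  simp [Pi.add_apply, h1 i hi, h2 i hi]

lemma Msp_neg (C : Ctx Ω) {t : ℝ} {u : LpSp C} (hu : u ∈ Msp C t) : -u ∈ Msp C t := by
  refine ⟨hu.1.neg.congr (Lp.coeFn_neg u).symm, ?_⟩
  filter_upwards [hu.2, Lp.coeFn_neg u] with ω h1 h3 i hi
  rw [h3]
  simp [Pi.neg_apply, h1 i hi]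

lemma Msp_smul (C : Ctx Ω) {t : ℝ} (a : ℝ) {u : LpSp C} (hu : u ∈ Msp C t) :
    a • u ∈ Msp C t := by
  refine ⟨(hu.1.const_smul a).congr (Lp.coeFn_smul a u).symm, ?_⟩
  filter_upwards [hu.2, Lp.coeFn_smul a u] with ω h1 h3 i hi
  rw [h3]
  simp [Pi.smul_apply, h1 i hi]

lemma Msp_zero (C : Ctx Ω) (t : ℝ) : (0 : LpSp C) ∈ Msp C t := by
  refine ⟨⟨fun _ => 0, @stronglyMeasurable_const _ _ (C.F t) _ _, Lp.coeFn_zero _ _ _⟩, ?_⟩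
  filter_upwards [Lp.coeFn_zero (EV C) C.p C.P] with ω h i hi
  rw [h]
  rfl

lemma MspPos_zero (C : Ctx Ω) (t : ℝ) : (0 : LpSp C) ∈ MspPos C t := by
  refine ⟨Msp_zero C t, ?_⟩
  filter_upwards [Lp.coeFn_zero (EV C) C.p C.P] with ω h i
  rw [h]
  exact le_refl 0

lemma Dmem_GMinus (C : Ctx Ω) (t : ℝ) {w : Ω → EV C}
    (hw : w ∈ posDual C t (MspPos C t)) (c : ℝ) :
    {u : LpSp C | u ∈ Msp C t ∧ pairF C w ⇑u ≤ c} ∈ GMinus C t := by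
  set D : Set (LpSp C) := {u : LpSp C | u ∈ Msp C t ∧ pairF C w ⇑u ≤ c} with hD
  obtain ⟨hwq, hwm, hwpos⟩ := hw
  have hDM : D ⊆ Msp C t := fun u hu => hu.1
  have hclosed : IsClosed D := by
    have : D = Msp C t ∩ (fun u : LpSp C => pairF C w ⇑u) ⁻¹' Set.Iic c := rfl
    rw [this]
    exact (isClosed_Msp C t).inter (IsClosed.preimage (pair_continuous C hwq) isClosed_Iic)
  have hconv : Convex ℝ D := by
    intro x hx y hy a b ha hb hab
    refine ⟨Msp_add C (Msp_smul C a hx.1) (Msp_smul C b hy.1), ?_⟩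
    rw [pairL_add C hwq, pairL_smul C, pairL_smul C]
    calc a * pairF C w ⇑x + b * pairF C w ⇑y ≤ a * c + b * c := by
          gcongr <;> [exact hx.2; exact hy.2]
      _ = c := by rw [← add_mul, hab, one_mul]
  have hsub : D + -(MspPos C t) = D := by
    apply Set.Subset.antisymm
    · rintro z ⟨a, ha, b, hb, rfl⟩
      have hb' : -b ∈ MspPos C t := by rwa [Set.mem_neg] at hb
      have hbM : b ∈ Msp C t := by
        have := Msp_neg C hb'.1
        rwa [neg_neg] at this
      refine ⟨Msp_add C ha.1 hbM, ?_⟩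
      have hbneg : pairF C w ⇑b ≤ 0 := by
        have h0 : 0 ≤ pairF C w ⇑(-b) := hwpos (-b) hb'
        rw [pairL_neg C] at h0
        linarith
      rw [pairL_add C hwq]
      have := ha.2
      linarith
    · intro u hu
      refine ⟨u, hu, 0, ?_, add_zero u⟩
      rw [Set.mem_neg, neg_zero]
      exact MspPos_zero C t
  refine ⟨hDM, ?_⟩
  rw [hsub, hconv.convexHull_eq, hclosed.closure_eq]

end Scalarization

/-- lower semicontinuity of the scalarization of a c.u.c. risk measure
(Proposition `prop_lsc`). -/
theorem statement13 (C : Ctx Ω) (t : ℝ) (ht0 : 0 ≤ t) (htT : t ≤ C.T)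
    (R : LpSp C → Set (LpSp C)) (hcrm : IsCRM C t R) (hcuc : CUC C t R)
    (w : Ω → EV C) (hw : w ∈ posDual C t (MspPos C t) \ Mperp C t) :
    LowerSemicontinuous fun X : LpSp C => ⨅ u ∈ R X, ((pairF C w ⇑u : ℝ) : EReal) := by
  intro X₀ y hy
  obtain ⟨c, hyc, hcX⟩ := EReal.exists_between_coe_real hy
  set D : Set (LpSp C) := {u : LpSp C | u ∈ Msp C t ∧ pairF C w ⇑u ≤ c} with hDdef
  have hDG : D ∈ GMinus C t := Dmem_GMinus C t hw.1 c
  have hS : IsClosed {X : LpSp C | (R X ∩ D).Nonempty} := hcuc D hDG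
  have hX₀ : X₀ ∈ {X : LpSp C | (R X ∩ D).Nonempty}ᶜ := by
    simp only [Set.mem_compl_iff, Set.mem_setOf_eq]
    rintro ⟨u, huR, _, huc⟩
    have h1 : (⨅ u ∈ R X₀, ((pairF C w ⇑u : ℝ) : EReal)) ≤ ((pairF C w ⇑u : ℝ) : EReal) :=
      iInf₂_le u huR
    have h2 : ((pairF C w ⇑u : ℝ) : EReal) ≤ (c : ℝ) := EReal.coe_le_coe_iff.mpr huc
    exact absurd (h1.trans h2) (not_le.mpr hcX)
  have hnhds : {X : LpSp C | (R X ∩ D).Nonempty}ᶜ ∈ nhds X₀ :=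
    hS.isOpen_compl.mem_nhds hX₀
  filter_upwards [hnhds] with X hX
  refine hyc.trans_le ?_
  refine le_iInf₂ fun u huR => ?_
  by_contra h
  push_neg at h
  have huc : pairF C w ⇑u ≤ c := le_of_lt (EReal.coe_lt_coe_iff.mp h)
  exact hX ⟨u, huR, hcrm.subM X huR, huc⟩

end MultiRisk
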